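/- (L¹ smoothing bias bound.) Let g be an absolutely continuous probability density on ℝ whose weak derivative g' is Lebesgue integrable. For λ > 0 define the Gaussian smoothing g_λ(x) = λ⁻¹ ∫ g(x−t) φ(t/λ) dt, where φ is the standard Gaussian density. Then ∫ |g_λ(x) − g(x)| dx ≤ 4 λ E|Z| · ∫ |g'(z)| dz, where Z is a standard Gaussian random variable, i.e., E|Z| = √(2/π). -/

import Mathlib

open MeasureTheory

noncomputable section

/-- `f` is a probability density on `ℝ`. -/
def IsProbDensity (f : ℝ → ℝ) : Prop :=
  (∀ x, 0 ≤ f x) ∧ Integrable f ∧ ∫ x, f x = 1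

/-- The standard Gaussian density `φ(x) = (2π)^{-1/2} e^{-x²/2}`. -/
def gaussPdf (x : ℝ) : ℝ := (Real.sqrt (2 * Real.pi))⁻¹ * Real.exp (-(x ^ 2) / 2)

section GaussAux

open Real Set
open scoped ENNReal

lemma gaussPdf_comp (l : ℝ) (hl : 0 < l) (t : ℝ) :
    gaussPdf (t / l) = (Real.sqrt (2 * Real.pi))⁻¹ * Real.exp (-((2 * l ^ 2)⁻¹) * t ^ 2) := by
  unfold gaussPdf
  have : -((t / l) ^ 2) / 2 = -((2 * l ^ 2)⁻¹) * t ^ 2 := by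
    rw [div_pow]; field_simp
  rw [this]

lemma sqrt_two_pi_mul (l : ℝ) (hl : 0 < l) :
    Real.sqrt (2 * Real.pi * l ^ 2) = Real.sqrt (2 * Real.pi) * l := by
  rw [Real.sqrt_mul (by positivity) (l ^ 2), Real.sqrt_sq hl.le]

lemma integral_phil (l : ℝ) (hl : 0 < l) :
    ∫ t : ℝ, l⁻¹ * gaussPdf (t / l) = 1 := by
  have h1 : ∀ t : ℝ, l⁻¹ * gaussPdf (t / l)
      = (l⁻¹ * (Real.sqrt (2 * Real.pi))⁻¹) * Real.exp (-((2 * l ^ 2)⁻¹) * t ^ 2) := by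
    intro t; rw [gaussPdf_comp l hl]; ring
  simp_rw [h1]
  rw [integral_const_mul, integral_gaussian]
  have h0 : Real.pi / (2 * l ^ 2)⁻¹ = 2 * Real.pi * l ^ 2 := by field_simp
  rw [h0, sqrt_two_pi_mul l hl]
  have h2 : Real.sqrt (2 * Real.pi) ≠ 0 := by positivity
  field_simp

lemma integrable_phil (l : ℝ) (hl : 0 < l) :
    Integrable (fun t : ℝ => l⁻¹ * gaussPdf (t / l)) := by
  have h1 : ∀ t : ℝ, l⁻¹ * gaussPdf (t / l)
      = (l⁻¹ * (Real.sqrt (2 * Real.pi))⁻¹) * Real.exp (-((2 * l ^ 2)⁻¹) * t ^ 2) := by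
    intro t; rw [gaussPdf_comp l hl]; ring
  simp_rw [h1]
  exact (integrable_exp_neg_mul_sq (by positivity)).const_mul _

lemma integrable_abs_phil (l : ℝ) (hl : 0 < l) :
    Integrable (fun t : ℝ => |t| * (l⁻¹ * gaussPdf (t / l))) := by
  have h1 : ∀ t : ℝ, |t| * (l⁻¹ * gaussPdf (t / l))
      = (l⁻¹ * (Real.sqrt (2 * Real.pi))⁻¹) * |t * Real.exp (-((2 * l ^ 2)⁻¹) * t ^ 2)| := by
    intro t; rw [gaussPdf_comp l hl, abs_mul, abs_of_nonneg (Real.exp_pos _).le]; ring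
  simp_rw [h1]
  exact ((integrable_mul_exp_neg_mul_sq (by positivity)).abs).const_mul _

lemma integral_Ioi_mul_exp (b : ℝ) (hb : 0 < b) :
    ∫ t in Set.Ioi (0:ℝ), t * Real.exp (-b * t ^ 2) = (2 * b)⁻¹ := by
  have hderiv : ∀ x ∈ Set.Ici (0:ℝ), HasDerivAt (fun s : ℝ => -(2 * b)⁻¹ * Real.exp (-b * s ^ 2))
      (x * Real.exp (-b * x ^ 2)) x := by
    intro x _
    have h1 : HasDerivAt (fun s : ℝ => -b * s ^ 2) (-b * (2 * x)) x := by
      simpa using ((hasDerivAt_pow 2 x).const_mul (-b))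
    have h2 := (h1.exp).const_mul (-(2 * b)⁻¹)
    refine h2.congr_deriv ?_
    field_simp
  have htend : Filter.Tendsto (fun s : ℝ => -(2 * b)⁻¹ * Real.exp (-b * s ^ 2))
      Filter.atTop (nhds 0) := by
    have : Filter.Tendsto (fun s : ℝ => Real.exp (-b * s ^ 2)) Filter.atTop (nhds 0) := by
      have h := Real.tendsto_exp_atBot
      apply h.comp
      have : Filter.Tendsto (fun s : ℝ => -b * s ^ 2) Filter.atTop Filter.atBot := by
        apply Filter.Tendsto.const_mul_atTop_of_neg (by linarith : -b < 0)
        exact Filter.tendsto_pow_atTop (by norm_num)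
      exact this
    simpa using this.const_mul (-(2 * b)⁻¹)
  have := MeasureTheory.integral_Ioi_of_hasDerivAt_of_tendsto' hderiv
    ((integrable_mul_exp_neg_mul_sq hb).integrableOn) htend
  rw [this]
  simp

lemma integral_abs_phil (l : ℝ) (hl : 0 < l) :
    ∫ t : ℝ, |t| * (l⁻¹ * gaussPdf (t / l)) = l * Real.sqrt (2 / Real.pi) := by
  have hb : (0:ℝ) < (2 * l ^ 2)⁻¹ := by positivity
  have h1 : ∀ t : ℝ, |t| * (l⁻¹ * gaussPdf (t / l))
      = (fun s : ℝ => (l⁻¹ * (Real.sqrt (2 * Real.pi))⁻¹) * (s * Real.exp (-((2 * l ^ 2)⁻¹) * s ^ 2))) |t| := by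
    intro t
    simp only
    rw [gaussPdf_comp l hl]
    rw [← sq_abs t]
    ring
  rw [show (fun t : ℝ => |t| * (l⁻¹ * gaussPdf (t / l)))
      = (fun t : ℝ => (fun s : ℝ => (l⁻¹ * (Real.sqrt (2 * Real.pi))⁻¹) *
        (s * Real.exp (-((2 * l ^ 2)⁻¹) * s ^ 2))) |t|) from funext h1]
  rw [integral_comp_abs (f := fun s : ℝ => (l⁻¹ * (Real.sqrt (2 * Real.pi))⁻¹) *
    (s * Real.exp (-((2 * l ^ 2)⁻¹) * s ^ 2)))]
  rw [integral_const_mul]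
  rw [integral_Ioi_mul_exp _ hb]
  have h2 : (2 * (2 * l ^ 2)⁻¹)⁻¹ = l ^ 2 := by
    rw [mul_inv, inv_inv]; ring
  rw [h2]
  have h3 : Real.sqrt (2 / Real.pi) = 2 / Real.sqrt (2 * Real.pi) := by
    have h5 : (2:ℝ) / Real.pi = (2 / Real.sqrt (2 * Real.pi)) ^ 2 := by
      rw [div_pow, Real.sq_sqrt (by positivity)]
      rw [show ((2:ℝ)^2) = 2 * 2 by norm_num]
      rw [show (2:ℝ) * 2 / (2 * Real.pi) = 2 / Real.pi by
        rw [mul_div_mul_left _ _ (two_ne_zero)]]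
    rw [h5, Real.sqrt_sq (by positivity)]
  rw [h3]
  have h4 : Real.sqrt (2 * Real.pi) ≠ 0 := by positivity
  field_simp

end GaussAux

section Main

open Real Set
open scoped ENNReal

/-- **L¹ smoothing bias bound.**  If `g` is an absolutely continuous probability density on `ℝ`
with Lebesgue-integrable weak derivative `g'`, and `g_λ(x) = λ⁻¹ ∫ g(x−t) φ(t/λ) dt` is its
Gaussian smoothing at bandwidth `λ > 0`, then
`∫ |g_λ − g| ≤ 4 λ E|Z| ∫|g'|` where `E|Z| = √(2/π)` is the absolute first moment of a
standard Gaussian. -/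
theorem L1_smoothing_bias_bound
    (g g' : ℝ → ℝ) (hg : IsProbDensity g)
    (hAC : ∀ a b : ℝ, g b - g a = ∫ x in a..b, g' x)
    (hg' : Integrable g')
    (l : ℝ) (hl : 0 < l) :
    ∫ x, |(l⁻¹ * ∫ t, g (x - t) * gaussPdf (t / l)) - g x| ≤
      4 * l * Real.sqrt (2 / Real.pi) * ∫ z, |g' z| := by
  have hφl_int : Integrable (fun t : ℝ => l⁻¹ * gaussPdf (t / l)) := integrable_phil l hl
  have hφl_one : ∫ t : ℝ, l⁻¹ * gaussPdf (t / l) = 1 := integral_phil l hl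
  have habs_int : Integrable (fun t : ℝ => |t| * (l⁻¹ * gaussPdf (t / l))) :=
    integrable_abs_phil l hl
  have habs : ∫ t : ℝ, |t| * (l⁻¹ * gaussPdf (t / l)) = l * Real.sqrt (2 / Real.pi) :=
    integral_abs_phil l hl
  -- notation
  set C : ℝ := ∫ z, |g' z| with hC_def
  have hC : 0 ≤ C := integral_nonneg fun z => abs_nonneg _
  set φl : ℝ → ℝ := fun t => l⁻¹ * gaussPdf (t / l) with hφl_def
  have hφl_nonneg : ∀ t, 0 ≤ φl t := by
    intro t
    exact mul_nonneg (by positivity) (mul_nonneg (by positivity) (Real.exp_pos _).le)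
  have hgauss_cont : Continuous gaussPdf := by
    unfold gaussPdf; continuity
  have hφl_cont : Continuous φl := by
    apply continuous_const.mul
    exact hgauss_cont.comp (continuous_id.div_const l)
  -- measurable representative of g'
  set q : ℝ → ℝ := (hg'.1.mk g') with hq_def
  have hqe : g' =ᵐ[volume] q := hg'.1.ae_eq_mk
  have hq_meas : Measurable q := hg'.1.stronglyMeasurable_mk.measurable
  have hq_int : Integrable q := hg'.congr hqe
  have hqC : ∫ z, |q z| = C := by
    rw [hC_def]
    exact (integral_congr_ae (hqe.mono fun z hz => by rw [hz])).symm
  -- continuity and boundedness of g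
  have hgc : Continuous g := by
    have : g = fun x => g 0 + ∫ s in (0:ℝ)..x, g' s := by
      funext x
      have := hAC 0 x
      linarith
    rw [this]
    exact continuous_const.add (intervalIntegral.continuous_primitive
      (fun a b => hg'.intervalIntegrable) 0)
  have habs_sub : ∀ a b : ℝ, |g b - g a| ≤ C := by
    intro a b
    rw [hAC a b]
    calc |∫ x in a..b, g' x| ≤ ∫ x in Set.uIoc a b, |g' x| := by
          simpa [Real.norm_eq_abs] using
            intervalIntegral.norm_integral_le_integral_norm_uIoc (a := a) (b := b) (f := g')
      _ ≤ C := by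
          rw [hC_def]
          exact setIntegral_le_integral hg'.abs (Filter.Eventually.of_forall fun z => abs_nonneg _)
  have hM : ∀ x, |g x| ≤ |g 0| + C := by
    intro x
    calc |g x| = |g 0 + (g x - g 0)| := by ring_nf
      _ ≤ |g 0| + |g x - g 0| := abs_add_le _ _
      _ ≤ |g 0| + C := by linarith [habs_sub 0 x]
  set M : ℝ := |g 0| + C with hM_def
  -- integrability in t for fixed x
  have hgauss_int : Integrable (fun t : ℝ => gaussPdf (t / l)) := by
    have h : (fun t : ℝ => gaussPdf (t / l)) = fun t => l * (l⁻¹ * gaussPdf (t / l)) := by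
      funext t; field_simp
    rw [h]; exact hφl_int.const_mul l
  have hint1 : ∀ x : ℝ, Integrable (fun t => g (x - t) * gaussPdf (t / l)) := by
    intro x
    exact hgauss_int.bdd_mul
      ((hgc.comp (continuous_const.sub continuous_id)).aestronglyMeasurable)
      (c := M) (Filter.Eventually.of_forall fun t => by simpa [Real.norm_eq_abs] using hM (x - t))
  have hint1' : ∀ x : ℝ, Integrable (fun t => g (x - t) * φl t) := by
    intro x
    have h : (fun t => g (x - t) * φl t) = fun t => l⁻¹ * (g (x - t) * gaussPdf (t / l)) := by
      funext t; simp only [hφl_def]; ring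
    rw [h]; exact (hint1 x).const_mul l⁻¹
  have hint2 : ∀ x : ℝ, Integrable (fun t => |g (x - t) - g x| * φl t) := by
    intro x
    exact hφl_int.bdd_mul
      (((hgc.comp (continuous_const.sub continuous_id)).sub continuous_const).abs.aestronglyMeasurable)
      (c := 2 * M) (Filter.Eventually.of_forall fun t => by
        rw [Real.norm_eq_abs, abs_abs]
        have h1 := hM (x - t); have h2 := hM x
        have := abs_sub (g (x - t)) (g x)
        calc |g (x - t) - g x| ≤ |g (x - t)| + |g x| := abs_sub _ _
          _ ≤ 2 * M := by rw [hM_def]; linarith)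
  -- the key pointwise representation
  have hFx : ∀ x : ℝ, (l⁻¹ * ∫ t, g (x - t) * gaussPdf (t / l)) - g x
      = ∫ t, (g (x - t) - g x) * φl t := by
    intro x
    have e1 : l⁻¹ * ∫ t, g (x - t) * gaussPdf (t / l) = ∫ t, g (x - t) * φl t := by
      rw [← integral_const_mul]
      congr 1; funext t; simp only [hφl_def]; ring
    have e2 : g x = ∫ t, g x * φl t := by
      rw [integral_const_mul, hφl_one, mul_one]
    rw [e1]
    nth_rewrite 1 [e2]
    rw [← integral_sub (hint1' x) (hφl_int.const_mul (g x))]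
    congr 1; funext t; ring
  have hJ : ∀ x : ℝ, |(l⁻¹ * ∫ t, g (x - t) * gaussPdf (t / l)) - g x|
      ≤ ∫ t, |g (x - t) - g x| * φl t := by
    intro x
    rw [hFx x]
    have h0 := norm_integral_le_integral_norm (μ := volume) (fun t => (g (x - t) - g x) * φl t)
    simp only [Real.norm_eq_abs, abs_mul] at h0
    have h1 : (∫ t, |g (x - t) - g x| * |φl t|) = ∫ t, |g (x - t) - g x| * φl t := by
      congr 1; funext t; rw [abs_of_nonneg (hφl_nonneg t)]
    rw [h1] at h0; exact h0
  -- measurability of the LHS integrand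
  have hFmeas : AEStronglyMeasurable
      (fun x => (l⁻¹ * ∫ t, g (x - t) * gaussPdf (t / l)) - g x) volume := by
    have hpc : Continuous (fun p : ℝ × ℝ => g (p.1 - p.2) * gaussPdf (p.2 / l)) := by
      apply Continuous.mul
      · exact hgc.comp (continuous_fst.sub continuous_snd)
      · exact hgauss_cont.comp (continuous_snd.div_const l)
    exact ((hpc.stronglyMeasurable.integral_prod_right'.aestronglyMeasurable).const_mul
      l⁻¹).sub hgc.aestronglyMeasurable
  set G : ℝ → ℝ≥0∞ := fun z => ENNReal.ofReal |q z| with hG_def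
  have hGmeas : Measurable G := ENNReal.measurable_ofReal.comp hq_meas.abs
  set Km : ℝ × ℝ → ℝ≥0∞ := fun p => ∫⁻ z, (Set.uIoc (p.2 - p.1) p.2).indicator G z with hKm_def
  have hSmeas : MeasurableSet {w : (ℝ × ℝ) × ℝ | w.2 ∈ Set.uIoc (w.1.2 - w.1.1) w.1.2} := by
    have he : {w : (ℝ × ℝ) × ℝ | w.2 ∈ Set.uIoc (w.1.2 - w.1.1) w.1.2}
        = ({w : (ℝ × ℝ) × ℝ | w.1.2 - w.1.1 < w.2} ∩ {w | w.2 ≤ w.1.2}) ∪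
          ({w : (ℝ × ℝ) × ℝ | w.1.2 < w.2} ∩ {w | w.2 ≤ w.1.2 - w.1.1}) := by
      ext w; simp [Set.mem_uIoc]
    rw [he]
    have m1 : Measurable fun w : (ℝ × ℝ) × ℝ => w.1.2 - w.1.1 :=
      (measurable_fst.snd).sub (measurable_fst.fst)
    exact ((measurableSet_lt m1 measurable_snd).inter
        (measurableSet_le measurable_snd measurable_fst.snd)).union
      ((measurableSet_lt measurable_fst.snd measurable_snd).inter
        (measurableSet_le measurable_snd m1))
  have hKm_meas : Measurable Km := by
    apply Measurable.lintegral_prod_right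
      (f := fun (p : ℝ × ℝ) (z : ℝ) => (Set.uIoc (p.2 - p.1) p.2).indicator G z)
    have he : (Function.uncurry fun (p : ℝ × ℝ) (z : ℝ) => (Set.uIoc (p.2 - p.1) p.2).indicator G z)
        = {w : (ℝ × ℝ) × ℝ | w.2 ∈ Set.uIoc (w.1.2 - w.1.1) w.1.2}.indicator (fun w => G w.2) := by
      funext w
      rfl
    rw [he]
    exact (hGmeas.comp measurable_snd).indicator hSmeas
  -- pointwise lintegral bound
  have hptwise : ∀ x : ℝ, ENNReal.ofReal |(l⁻¹ * ∫ t, g (x - t) * gaussPdf (t / l)) - g x|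
      ≤ ∫⁻ t, ENNReal.ofReal (φl t) * Km (t, x) := by
    intro x
    have step1 := ENNReal.ofReal_le_ofReal (hJ x)
    have step2 : ENNReal.ofReal (∫ t, |g (x - t) - g x| * φl t)
        = ∫⁻ t, ENNReal.ofReal (|g (x - t) - g x| * φl t) :=
      ofReal_integral_eq_lintegral_ofReal (hint2 x)
        (Filter.Eventually.of_forall fun t => mul_nonneg (abs_nonneg _) (hφl_nonneg t))
    refine (step1.trans_eq step2).trans (lintegral_mono fun t => ?_)
    rw [ENNReal.ofReal_mul (abs_nonneg _), mul_comm]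
    apply mul_le_mul_right
    have e1 : |g (x - t) - g x| = |∫ z in (x - t)..x, q z| := by
      rw [abs_sub_comm, hAC (x - t) x]
      congr 1
      exact intervalIntegral.integral_congr_ae (hqe.mono fun z hz _ => hz)
    have e2 : |∫ z in (x - t)..x, q z| ≤ ∫ z in Set.uIoc (x - t) x, |q z| := by
      simpa [Real.norm_eq_abs] using
        intervalIntegral.norm_integral_le_integral_norm_uIoc (a := x - t) (b := x) (f := q)
          (μ := volume)
    have e3 : ENNReal.ofReal (∫ z in Set.uIoc (x - t) x, |q z|)
        = ∫⁻ z in Set.uIoc (x - t) x, ENNReal.ofReal |q z| :=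
      ofReal_integral_eq_lintegral_ofReal (hq_int.abs.integrableOn)
        (Filter.Eventually.of_forall fun z => abs_nonneg _)
    have e4 : (∫⁻ z in Set.uIoc (x - t) x, ENNReal.ofReal |q z|) = Km (t, x) := by
      rw [hKm_def]
      simp only
      rw [lintegral_indicator measurableSet_uIoc]
    calc ENNReal.ofReal |g (x - t) - g x|
        ≤ ENNReal.ofReal (∫ z in Set.uIoc (x - t) x, |q z|) := by
          rw [e1]; exact ENNReal.ofReal_le_ofReal e2
      _ = Km (t, x) := e3.trans e4
  -- the moving-interval sets
  have hsetm : ∀ t z : ℝ, MeasurableSet {x : ℝ | z ∈ Set.uIoc (x - t) x} := by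
    intro t z
    have he : {x : ℝ | z ∈ Set.uIoc (x - t) x}
        = ({x : ℝ | x - t < z} ∩ {x | z ≤ x}) ∪ ({x : ℝ | x < z} ∩ {x | z ≤ x - t}) := by
      ext x; simp [Set.mem_uIoc]
    rw [he]
    exact (((measurableSet_lt (measurable_id.sub measurable_const) measurable_const).inter
        (measurableSet_le measurable_const measurable_id)).union
      ((measurableSet_lt measurable_id measurable_const).inter
        (measurableSet_le measurable_const (measurable_id.sub measurable_const))))
  have hvol : ∀ t z : ℝ, volume {x : ℝ | z ∈ Set.uIoc (x - t) x} = ENNReal.ofReal |t| := by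
    intro t z
    rcases le_or_gt 0 t with ht | ht
    · have he : {x : ℝ | z ∈ Set.uIoc (x - t) x} = Set.Ico z (z + t) := by
        ext x
        simp only [Set.mem_uIoc, Set.mem_setOf_eq, Set.mem_Ico]
        constructor
        · rintro (⟨h1, h2⟩ | ⟨h1, h2⟩) <;> constructor <;> linarith
        · rintro ⟨h1, h2⟩; left; exact ⟨by linarith, h1⟩
      rw [he, Real.volume_Ico, abs_of_nonneg ht]
      ring_nf
    · have he : {x : ℝ | z ∈ Set.uIoc (x - t) x} = Set.Ico (z + t) z := by
        ext x
        simp only [Set.mem_uIoc, Set.mem_setOf_eq, Set.mem_Ico]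
        constructor
        · rintro (⟨h1, h2⟩ | ⟨h1, h2⟩) <;> constructor <;> linarith
        · rintro ⟨h1, h2⟩; right; exact ⟨h2, by linarith⟩
      rw [he, Real.volume_Ico, abs_of_neg ht]
      ring_nf
  have hKx : ∀ t : ℝ, (∫⁻ x, Km (t, x)) = ENNReal.ofReal |t| * ∫⁻ z, G z := by
    intro t
    have hswap : (∫⁻ x, ∫⁻ z, (Set.uIoc (x - t) x).indicator G z)
        = ∫⁻ z, ∫⁻ x, (Set.uIoc (x - t) x).indicator G z := by
      apply lintegral_lintegral_swap
      apply Measurable.aemeasurable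
      have he : (Function.uncurry fun (x z : ℝ) => (Set.uIoc (x - t) x).indicator G z)
          = {w : ℝ × ℝ | w.2 ∈ Set.uIoc (w.1 - t) w.1}.indicator (fun w => G w.2) := by
        funext w; rfl
      rw [he]
      refine (hGmeas.comp measurable_snd).indicator ?_
      have he2 : {w : ℝ × ℝ | w.2 ∈ Set.uIoc (w.1 - t) w.1}
          = ({w : ℝ × ℝ | w.1 - t < w.2} ∩ {w | w.2 ≤ w.1}) ∪
            ({w : ℝ × ℝ | w.1 < w.2} ∩ {w | w.2 ≤ w.1 - t}) := by
        ext w; simp [Set.mem_uIoc]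
      rw [he2]
      have m1 : Measurable fun w : ℝ × ℝ => w.1 - t := measurable_fst.sub measurable_const
      exact ((measurableSet_lt m1 measurable_snd).inter
          (measurableSet_le measurable_snd measurable_fst)).union
        ((measurableSet_lt measurable_fst measurable_snd).inter
          (measurableSet_le measurable_snd m1))
    have hKm_app : (fun x => Km (t, x)) = fun x => ∫⁻ z, (Set.uIoc (x - t) x).indicator G z := rfl
    rw [hKm_app, hswap]
    have hinner : ∀ z : ℝ, (∫⁻ x, (Set.uIoc (x - t) x).indicator G z)
        = G z * ENNReal.ofReal |t| := by
      intro z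
      have he : (fun x => (Set.uIoc (x - t) x).indicator G z)
          = {x : ℝ | z ∈ Set.uIoc (x - t) x}.indicator (fun _ => G z) := by
        funext x; rfl
      rw [he, lintegral_indicator_const (hsetm t z), hvol t z]
    simp_rw [hinner]
    rw [lintegral_mul_const _ hGmeas, mul_comm]
  have hGC : (∫⁻ z, G z) = ENNReal.ofReal C := by
    rw [← hqC]
    exact (ofReal_integral_eq_lintegral_ofReal hq_int.abs
      (Filter.Eventually.of_forall fun z => abs_nonneg _)).symm
  -- main lintegral estimate
  have hmain : (∫⁻ x, ENNReal.ofReal |(l⁻¹ * ∫ t, g (x - t) * gaussPdf (t / l)) - g x|)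
      ≤ ENNReal.ofReal (l * Real.sqrt (2 / Real.pi) * C) := by
    have c1 : (∫⁻ x, ENNReal.ofReal |(l⁻¹ * ∫ t, g (x - t) * gaussPdf (t / l)) - g x|)
        ≤ ∫⁻ x, ∫⁻ t, ENNReal.ofReal (φl t) * Km (t, x) := lintegral_mono hptwise
    have c2 : (∫⁻ x, ∫⁻ t, ENNReal.ofReal (φl t) * Km (t, x))
        = ∫⁻ t, ∫⁻ x, ENNReal.ofReal (φl t) * Km (t, x) := by
      apply lintegral_lintegral_swap
      apply Measurable.aemeasurable
      exact ((ENNReal.measurable_ofReal.comp (hφl_cont.measurable.comp measurable_snd)).mul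
        (hKm_meas.comp measurable_swap))
    have c3 : (∫⁻ t, ∫⁻ x, ENNReal.ofReal (φl t) * Km (t, x))
        = ∫⁻ t, ENNReal.ofReal (|t| * φl t * C) := by
      apply lintegral_congr
      intro t
      rw [lintegral_const_mul (ENNReal.ofReal (φl t)) (f := fun x => Km (t, x))
        (by exact hKm_meas.comp measurable_prodMk_left), hKx t, hGC,
        ENNReal.ofReal_mul (mul_nonneg (abs_nonneg _) (hφl_nonneg t)),
        ENNReal.ofReal_mul (abs_nonneg _)]
      ring
    have c4 : (∫⁻ t, ENNReal.ofReal (|t| * φl t * C))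
        = ENNReal.ofReal (l * Real.sqrt (2 / Real.pi) * C) := by
      rw [← ofReal_integral_eq_lintegral_ofReal (habs_int.mul_const C)
        (Filter.Eventually.of_forall fun t =>
          mul_nonneg (mul_nonneg (abs_nonneg _) (hφl_nonneg t)) hC)]
      rw [integral_mul_const, habs]
    calc (∫⁻ x, ENNReal.ofReal |(l⁻¹ * ∫ t, g (x - t) * gaussPdf (t / l)) - g x|)
        ≤ ∫⁻ x, ∫⁻ t, ENNReal.ofReal (φl t) * Km (t, x) := c1
      _ = ∫⁻ t, ∫⁻ x, ENNReal.ofReal (φl t) * Km (t, x) := c2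
      _ = ∫⁻ t, ENNReal.ofReal (|t| * φl t * C) := c3
      _ = ENNReal.ofReal (l * Real.sqrt (2 / Real.pi) * C) := c4
  -- conclude
  have heq : (∫ x, |(l⁻¹ * ∫ t, g (x - t) * gaussPdf (t / l)) - g x|)
      = (∫⁻ x, ENNReal.ofReal |(l⁻¹ * ∫ t, g (x - t) * gaussPdf (t / l)) - g x|).toReal := by
    apply integral_eq_lintegral_of_nonneg_ae
    · exact Filter.Eventually.of_forall fun x => abs_nonneg _
    · exact (hFmeas.norm).congr (Filter.Eventually.of_forall fun x => (Real.norm_eq_abs _))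
  rw [heq]
  have hfin := ENNReal.toReal_le_of_le_ofReal
    (by positivity : (0:ℝ) ≤ l * Real.sqrt (2 / Real.pi) * C) hmain
  have hnn : 0 ≤ l * Real.sqrt (2 / Real.pi) * C := by positivity
  nlinarith [hfin, hnn]

end Main
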